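/- Let E_1,…,E_n be quantum operations on ℂ^d with Kraus operators {E_i^k}. If for some index i one has supp(E_i) ⊆ Σ_{j≠i} supp(E_j), then for every ancilla dimension d_a and every vector ψ ∈ ℂ^d ⊗ ℂ^{d_a}, the column space of the output matrix (E_i ⊗ I)(|ψ⟩⟨ψ|) = Σ_k (E_i^k ⊗ I)|ψ⟩⟨ψ|(E_i^k ⊗ I)† is contained in the sum over j ≠ i of the column spaces of the matrices (E_j ⊗ I)(|ψ⟩⟨ψ|). -/

import Mathlib

open Matrix Kronecker
open scoped ComplexOrder

noncomputable section

/-- A quantum operation on ℂ^d given by a finite family of Kraus operators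
satisfying the completeness condition. -/
structure QuantumOp (d : ℕ) where
  m : ℕ
  K : Fin m → Matrix (Fin d) (Fin d) ℂ
  complete : ∑ k, (K k)ᴴ * K k = 1

/-- The support of a quantum operation: the span of its Kraus operators. -/
def QuantumOp.supp {d : ℕ} (E : QuantumOp d) : Submodule ℂ (Matrix (Fin d) (Fin d) ℂ) :=
  Submodule.span ℂ (Set.range E.K)

/-- The output state (E ⊗ I)(|ψ⟩⟨ψ|) = Σ_k (E^k ⊗ I)|ψ⟩⟨ψ|(E^k ⊗ I)†. -/
def QuantumOp.output {d : ℕ} (E : QuantumOp d) (da : ℕ) (ψ : Fin d × Fin da → ℂ) :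
    Matrix (Fin d × Fin da) (Fin d × Fin da) ℂ :=
  ∑ k, (E.K k ⊗ₖ (1 : Matrix (Fin da) (Fin da) ℂ)) * vecMulVec ψ (star ψ) *
    (E.K k ⊗ₖ (1 : Matrix (Fin da) (Fin da) ℂ))ᴴ

/-- States σ_1, …, σ_n are unambiguously distinguishable if there is a POVM
{Π_0, Π_1, …, Π_n} with tr(Π_i σ_j) = 0 for i ≠ j and tr(Π_i σ_i) > 0. -/
def UnambiguouslyDistinguishable {μ : Type*} [Fintype μ] [DecidableEq μ] {n : ℕ}
    (σ : Fin n → Matrix μ μ ℂ) : Prop :=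
  ∃ P0 : Matrix μ μ ℂ, ∃ P : Fin n → Matrix μ μ ℂ,
    P0.PosSemidef ∧ (∀ i, (P i).PosSemidef) ∧
    (P0 + ∑ i, P i = 1) ∧
    (∀ i j, i ≠ j → (P i * σ j).trace = 0) ∧
    (∀ i, 0 < (P i * σ i).trace)

lemma vecMulVec_mulVec_eq {ι : Type*} [Fintype ι] (a b x : ι → ℂ) :
    (vecMulVec a b) *ᵥ x = (b ⬝ᵥ x) • a := by
  ext i
  simp only [mulVec, dotProduct, vecMulVec_apply, Pi.smul_apply, smul_eq_mul, Finset.sum_mul]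
  exact Finset.sum_congr rfl fun j _ => by ring

lemma sandwich {ι : Type*} [Fintype ι] (A : Matrix ι ι ℂ) (ψ : ι → ℂ) :
    A * vecMulVec ψ (star ψ) * Aᴴ = vecMulVec (A *ᵥ ψ) (star (A *ᵥ ψ)) := by
  rw [vecMulVec_eq Unit, vecMulVec_eq Unit, Matrix.replicateCol_mulVec, star_mulVec,
    Matrix.replicateRow_vecMul]
  simp only [Matrix.mul_assoc]

lemma my_sum_mulVec {ι : Type*} [Fintype ι] {m : ℕ} (A : Fin m → Matrix ι ι ℂ) (x : ι → ℂ) :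
    (∑ k, A k) *ᵥ x = ∑ k, A k *ᵥ x := by
  ext i
  simp only [mulVec, dotProduct, Matrix.sum_apply, Finset.sum_mul, Finset.sum_apply]
  exact Finset.sum_comm

lemma my_dotProduct_sum {ι : Type*} [Fintype ι] {m : ℕ} (w : ι → ℂ) (f : Fin m → ι → ℂ) :
    w ⬝ᵥ (∑ k, f k) = ∑ k, w ⬝ᵥ f k := by
  simp only [dotProduct, Finset.sum_apply, Finset.mul_sum]
  exact Finset.sum_comm

lemma sum_rankOne_mulVec {ι : Type*} [Fintype ι] {m : ℕ} (v : Fin m → ι → ℂ) (x : ι → ℂ) :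
    (∑ k, vecMulVec (v k) (star (v k))) *ᵥ x = ∑ k, ((star (v k)) ⬝ᵥ x) • v k := by
  rw [my_sum_mulVec]
  exact Finset.sum_congr rfl fun k _ => vecMulVec_mulVec_eq _ _ _

lemma mem_range_sum_rankOne {ι : Type*} [Fintype ι] [DecidableEq ι] {m : ℕ}
    (v : Fin m → ι → ℂ) (k0 : Fin m) :
    v k0 ∈ LinearMap.range (∑ k, vecMulVec (v k) (star (v k))).mulVecLin := by
  set M : Matrix ι ι ℂ := ∑ k, vecMulVec (v k) (star (v k)) with hM
  have hherm : Mᴴ = M := by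
    rw [hM, conjTranspose_sum]
    refine Finset.sum_congr rfl fun k _ => ?_
    ext p q
    simp [vecMulVec_apply, conjTranspose_apply, mul_comm]
  have hdisj : Disjoint (LinearMap.range M.mulVecLin) (LinearMap.ker M.mulVecLin) := by
    rw [Submodule.disjoint_def]
    rintro x ⟨y, rfl⟩ hker
    have hker' : M *ᵥ (M *ᵥ y) = 0 := hker
    have h0 : star (M *ᵥ y) ⬝ᵥ (M *ᵥ y) = 0 := by
      rw [star_mulVec, hherm, ← dotProduct_mulVec, hker', dotProduct_zero]
    simpa using dotProduct_star_self_eq_zero.mp h0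
  have htop : LinearMap.range M.mulVecLin ⊔ LinearMap.ker M.mulVecLin = ⊤ :=
    Submodule.eq_top_of_disjoint _ _ (LinearMap.finrank_range_add_finrank_ker _).ge hdisj
  have hmem : v k0 ∈ LinearMap.range M.mulVecLin ⊔ LinearMap.ker M.mulVecLin := by
    rw [htop]; trivial
  obtain ⟨r, hr, z, hz, hrz⟩ := Submodule.mem_sup.mp hmem
  have hzform : ∀ k, star (v k) ⬝ᵥ z = 0 := by
    have h0 : star z ⬝ᵥ (M *ᵥ z) = 0 := by
      rw [LinearMap.mem_ker, Matrix.mulVecLin_apply] at hz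
      rw [hz, dotProduct_zero]
    rw [hM, sum_rankOne_mulVec, my_dotProduct_sum] at h0
    have h1 : ∑ k, star (star (v k) ⬝ᵥ z) * (star (v k) ⬝ᵥ z) = 0 := by
      rw [← h0]
      refine Finset.sum_congr rfl fun k _ => ?_
      rw [dotProduct_smul, smul_eq_mul, star_dotProduct z (v k)]
      ring
    intro k
    have h2 := (Finset.sum_eq_zero_iff_of_nonneg
      (fun k _ => star_mul_self_nonneg (star (v k) ⬝ᵥ z))).mp h1 k (Finset.mem_univ k)
    rcases mul_eq_zero.mp h2 with h | h
    · simpa using congrArg star h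
    · exact h
  have hzv : ∀ k, star z ⬝ᵥ v k = 0 := fun k => by
    rw [star_dotProduct, hzform k, star_zero]
  have hzr : star z ⬝ᵥ r = 0 := by
    obtain ⟨y, rfl⟩ := hr
    rw [Matrix.mulVecLin_apply, hM, sum_rankOne_mulVec, my_dotProduct_sum]
    exact Finset.sum_eq_zero fun k _ => by rw [dotProduct_smul, hzv k, smul_zero]
  have hz0 : z = 0 := by
    have : star z ⬝ᵥ v k0 = star z ⬝ᵥ r + star z ⬝ᵥ z := by
      rw [← dotProduct_add, hrz]
    rw [hzv k0, hzr, zero_add] at this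
    exact dotProduct_star_self_eq_zero.mp this.symm
  rw [← hrz, hz0, add_zero]
  exact hr

/-- if supp(E_i) ⊆ Σ_{j≠i} supp(E_j), then for every ancilla dimension and
every input vector ψ, the column space of (E_i ⊗ I)(|ψ⟩⟨ψ|) is contained in the sum of
the column spaces of the (E_j ⊗ I)(|ψ⟩⟨ψ|), j ≠ i. -/
theorem output_range_le_of_supp_le {d n : ℕ} (E : Fin n → QuantumOp d) (i : Fin n)
    (h : (E i).supp ≤ ⨆ j ≠ i, (E j).supp) (da : ℕ) (ψ : Fin d × Fin da → ℂ) :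
    LinearMap.range ((E i).output da ψ).mulVecLin ≤
      ⨆ j ≠ i, LinearMap.range ((E j).output da ψ).mulVecLin := by
  classical
  set L : Matrix (Fin d) (Fin d) ℂ →ₗ[ℂ] ((Fin d × Fin da) → ℂ) :=
    { toFun := fun A => (A ⊗ₖ (1 : Matrix (Fin da) (Fin da) ℂ)) *ᵥ ψ
      map_add' := fun A B => by rw [Matrix.add_kronecker, Matrix.add_mulVec]
      map_smul' := fun c A => by
        rw [Matrix.smul_kronecker, RingHom.id_apply, Matrix.smul_mulVec] } with hL
  have hLapp : ∀ A : Matrix (Fin d) (Fin d) ℂ,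
      L A = (A ⊗ₖ (1 : Matrix (Fin da) (Fin da) ℂ)) *ᵥ ψ := fun A => rfl
  have houtput : ∀ F : QuantumOp d, F.output da ψ =
      ∑ k, vecMulVec (L (F.K k)) (star (L (F.K k))) := by
    intro F
    unfold QuantumOp.output
    exact Finset.sum_congr rfl fun k _ => by rw [sandwich, hLapp]
  have hmapsupp : ∀ F : QuantumOp d,
      Submodule.map L F.supp ≤ LinearMap.range (F.output da ψ).mulVecLin := by
    intro F
    rw [Submodule.map_le_iff_le_comap, QuantumOp.supp, Submodule.span_le]
    rintro _ ⟨k, rfl⟩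
    rw [SetLike.mem_coe, Submodule.mem_comap, houtput F]
    exact mem_range_sum_rankOne _ k
  rintro _ ⟨y, rfl⟩
  rw [Matrix.mulVecLin_apply, houtput (E i), sum_rankOne_mulVec]
  refine Submodule.sum_mem _ fun k _ => Submodule.smul_mem _ _ ?_
  have h1 : (E i).K k ∈ ⨆ j, ⨆ _ : j ≠ i, (E j).supp :=
    h (Submodule.subset_span (Set.mem_range_self k))
  have h2 : L ((E i).K k) ∈ Submodule.map L (⨆ j, ⨆ _ : j ≠ i, (E j).supp) :=
    Submodule.mem_map_of_mem h1
  simp_rw [Submodule.map_iSup] at h2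
  exact (iSup₂_mono fun j _ => hmapsupp (E j)) h2
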